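/- arXiv:1510.02593 — 2 statements merged into one kernel-verified Lean document; each statement's English description precedes it below -/
import Mathlib

section
/- Let (ξ_i)_{i≥1} be positive, non-constant i.i.d. random variables with 𝔼[ξ_1] = 1 and 𝔼[ξ_1³ + (log ξ_1)²] < ∞. Then there exists a constant c ∈ (0,∞), depending only on the law of ξ_1, such that for every sequence (α_i)_{i≥1} ∈ [0,1]^ℕ with Σ_{i=1}^∞ α_i = 1, setting U := Σ_{i=1}^∞ α_i ξ_i − 1 (so U > −1 a.s.), one has (1/c) Σ_{i=1}^∞ α_i² ≤ 𝔼[U²/(2+U)]. -/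
open MeasureTheory ProbabilityTheory Filter Topology

noncomputable section

lemma quad_le_exp {y : ℝ} (hy : -2 ≤ y) : 1 + y + y^2/4 ≤ Real.exp y := by
  have h := Real.add_one_le_exp (y/2)
  have h2 : (0:ℝ) ≤ 1 + y/2 := by linarith
  have h3 : Real.exp y = (Real.exp (y/2))^2 := by
    rw [← Real.exp_nat_mul]; ring_nf
  nlinarith [sq_nonneg (y/2)]

lemma prod_one_add_le {x : ℕ → ℝ} (hx : ∀ i, 0 ≤ x i) (N : ℕ) :
    1 + ∑ i ∈ Finset.range N, x i ≤ ∏ i ∈ Finset.range N, (1 + x i) := by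
  induction N with
  | zero => simp
  | succ n ih =>
    rw [Finset.sum_range_succ, Finset.prod_range_succ]
    have h1 : (0:ℝ) ≤ ∑ i ∈ Finset.range n, x i := Finset.sum_nonneg fun i _ => hx i
    nlinarith [hx n]

lemma factor_bound {Ω : Type} [MeasurableSpace Ω] (μ : Measure Ω) [IsProbabilityMeasure μ]
    (X : Ω → ℝ) (hm : Measurable X) (hpos : ∀ᵐ a ∂μ, 0 < X a) (hint : Integrable X μ)
    (hmean : ∫ a, X a ∂μ = 1) {K τ : ℝ} (hK : 1 ≤ K) (hτ0 : τ ≤ 0) (hτ : -(1/K) ≤ τ) :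
    1 + τ^2/4 * (∫ a, (if X a ≤ K then (X a - 1)^2 else 0) ∂μ) ≤
      ∫ a, Real.exp (τ * (X a - 1)) ∂μ := by
  have hK0 : (0:ℝ) < K := lt_of_lt_of_le one_pos hK
  have hKK : (1/K) * K = 1 := by field_simp
  set W : Ω → ℝ := fun a => if X a ≤ K then (X a - 1)^2 else 0 with hW
  have hWm : Measurable W := Measurable.ite (measurableSet_le hm measurable_const)
    ((hm.sub measurable_const).pow_const 2) measurable_const
  have hWb : ∀ᵐ a ∂μ, ‖W a‖ ≤ K^2 := by
    filter_upwards [hpos] with a ha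
    simp only [hW]
    split_ifs with h
    · rw [Real.norm_of_nonneg (sq_nonneg _)]
      nlinarith
    · rw [norm_zero]; positivity
  have hWint : Integrable W μ := Integrable.mono' (integrable_const (K^2))
    hWm.aestronglyMeasurable hWb
  have hτX : Integrable (fun a => τ * (X a - 1)) μ :=
    (hint.sub (integrable_const 1)).const_mul τ
  have hA : Integrable (fun a => 1 + τ * (X a - 1)) μ := (integrable_const 1).add hτX
  have hB : Integrable (fun a => τ^2/4 * W a) μ := hWint.const_mul _
  have hEint : Integrable (fun a => Real.exp (τ * (X a - 1))) μ := by
    refine Integrable.mono' (integrable_const (Real.exp 1)) ?_ ?_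
    · exact ((hm.sub measurable_const).const_mul τ).exp.aestronglyMeasurable
    · filter_upwards [hpos] with a ha
      rw [Real.norm_of_nonneg (Real.exp_pos _).le]
      apply Real.exp_le_exp.2
      have h1 : τ * X a ≤ 0 := mul_nonpos_of_nonpos_of_nonneg hτ0 ha.le
      have h3 : 1/K ≤ 1 := by rw [div_le_one hK0]; exact hK
      nlinarith
  have hmono : ∀ᵐ a ∂μ, 1 + τ * (X a - 1) + τ^2/4 * W a ≤ Real.exp (τ * (X a - 1)) := by
    filter_upwards [hpos] with a ha
    simp only [hW]
    split_ifs with h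
    · have h1 : τ * X a ≥ -(1/K) * X a := mul_le_mul_of_nonneg_right hτ ha.le
      have h2 : -(1/K) * X a ≥ -(1/K) * K := by
        have h4 : (0:ℝ) ≤ 1/K := by positivity
        nlinarith
      have hy : -2 ≤ τ * (X a - 1) := by
        have h5 : τ * (X a - 1) = τ * X a - τ := by ring
        have h6 : -(1/K) * K = -1 := by rw [neg_mul, hKK]
        linarith
      have := quad_le_exp hy
      calc 1 + τ * (X a - 1) + τ^2/4 * (X a - 1)^2
          = 1 + (τ * (X a - 1)) + (τ * (X a - 1))^2/4 := by ring
        _ ≤ Real.exp (τ * (X a - 1)) := this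
    · have := Real.add_one_le_exp (τ * (X a - 1))
      simpa [mul_zero, add_zero] using by linarith
  calc 1 + τ^2/4 * ∫ a, W a ∂μ
      = ∫ a, (1 + τ * (X a - 1) + τ^2/4 * W a) ∂μ := by
        rw [integral_add hA hB, integral_add (integrable_const 1) hτX,
            integral_const_mul, integral_const_mul,
            integral_sub hint (integrable_const 1), hmean]
        simp
      _ ≤ ∫ a, Real.exp (τ * (X a - 1)) ∂μ := integral_mono_ae (hA.add hB) hEint hmono

lemma factor_bound0 {Ω : Type} [MeasurableSpace Ω] (μ : Measure Ω) [IsProbabilityMeasure μ]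
    (X : Ω → ℝ) (hm : Measurable X) (hpos : ∀ᵐ a ∂μ, 0 < X a) (hint : Integrable X μ)
    (hmean : ∫ a, X a ∂μ = 1) {τ : ℝ} (hτ0 : τ ≤ 0) :
    1 ≤ ∫ a, Real.exp (τ * (X a - 1)) ∂μ := by
  have hτX : Integrable (fun a => τ * (X a - 1)) μ :=
    (hint.sub (integrable_const 1)).const_mul τ
  have hA : Integrable (fun a => 1 + τ * (X a - 1)) μ := (integrable_const 1).add hτX
  have hEint : Integrable (fun a => Real.exp (τ * (X a - 1))) μ := by
    refine Integrable.mono' (integrable_const (Real.exp (-τ))) ?_ ?_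
    · exact ((hm.sub measurable_const).const_mul τ).exp.aestronglyMeasurable
    · filter_upwards [hpos] with a ha
      rw [Real.norm_of_nonneg (Real.exp_pos _).le]
      apply Real.exp_le_exp.2
      nlinarith [mul_nonpos_of_nonpos_of_nonneg hτ0 ha.le]
  have hmono : ∀ᵐ a ∂μ, 1 + τ * (X a - 1) ≤ Real.exp (τ * (X a - 1)) := by
    filter_upwards with a
    linarith [Real.add_one_le_exp (τ * (X a - 1))]
  have h1 : ∫ a, (1 + τ * (X a - 1)) ∂μ = 1 := by
    rw [integral_add (integrable_const 1) hτX, integral_const_mul,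
        integral_sub hint (integrable_const 1), hmean]
    simp
  calc (1:ℝ) = ∫ a, (1 + τ * (X a - 1)) ∂μ := h1.symm
    _ ≤ _ := integral_mono_ae hA hEint hmono

set_option maxHeartbeats 2000000 in
/-- Let `(ξ_i)` be positive, non-constant i.i.d. random variables with
`𝔼[ξ₁] = 1` and `𝔼[ξ₁³ + (log ξ₁)²] < ∞`. Then there is a constant `c ∈ (0,∞)`, depending
only on the law of `ξ₁`, such that for every `(α_i) ∈ [0,1]^ℕ` with `Σ α_i = 1`, setting
`U = Σ α_i ξ_i − 1`, one has `(1/c) Σ α_i² ≤ 𝔼[U²/(2+U)]`. -/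
theorem fractional_moment_lower_bound
    {Ω : Type} [MeasurableSpace Ω] (μ : Measure Ω) [IsProbabilityMeasure μ]
    (ξ : ℕ → Ω → ℝ)
    (hmeas : ∀ i, Measurable (ξ i))
    (hindep : iIndepFun ξ μ)
    (hident : ∀ i, IdentDistrib (ξ i) (ξ 0) μ μ)
    (hpos : ∀ i, ∀ᵐ a ∂μ, 0 < ξ i a)
    (hnonconst : ¬ ∃ r : ℝ, ∀ᵐ a ∂μ, ξ 0 a = r)
    (hmean : ∫ a, ξ 0 a ∂μ = 1)
    (hcube : Integrable (fun a => (ξ 0 a) ^ 3) μ)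
    (hlogsq : Integrable (fun a => (Real.log (ξ 0 a)) ^ 2) μ) :
    ∃ c : ℝ, 0 < c ∧ ∀ α : ℕ → ℝ, (∀ i, α i ∈ Set.Icc (0:ℝ) 1) → HasSum α 1 →
      (1 / c) * ∑' i : ℕ, (α i) ^ 2 ≤
        ∫ a, ((∑' i : ℕ, α i * ξ i a) - 1) ^ 2 / (2 + ((∑' i : ℕ, α i * ξ i a) - 1)) ∂μ := by
  -- Step A : integrability of ξ 0
  have hpos_all : ∀ᵐ a ∂μ, ∀ i, 0 < ξ i a := ae_all_iff.2 hpos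
  have hint0 : Integrable (ξ 0) μ := by
    refine Integrable.mono' ((integrable_const 1).add hcube) (hmeas 0).aestronglyMeasurable ?_
    filter_upwards [hpos 0] with a ha
    simp only [Pi.add_apply]
    rw [Real.norm_of_nonneg ha.le]
    nlinarith [sq_nonneg (ξ 0 a - 1), sq_nonneg (ξ 0 a + 1), ha.le]
  have hinti : ∀ i, Integrable (ξ i) μ := fun i => ((hident i).integrable_iff).2 hint0
  have hmeani : ∀ i, ∫ a, ξ i a ∂μ = 1 := fun i => ((hident i).integral_eq).trans hmean
  -- Step B : existence of K
  have hexists : ∃ K : ℝ, 1 ≤ K ∧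
      0 < ∫ a, (if ξ 0 a ≤ K then (ξ 0 a - 1)^2 else 0) ∂μ := by
    by_contra hcon
    push_neg at hcon
    have hzero : ∀ n : ℕ, ∀ᵐ a ∂μ, (if ξ 0 a ≤ (n+1 : ℝ) then (ξ 0 a - 1)^2 else 0) = 0 := by
      intro n
      have hn1 : (1:ℝ) ≤ (n+1 : ℝ) := by
        have : (0:ℝ) ≤ (n:ℝ) := Nat.cast_nonneg n
        linarith
      set W : Ω → ℝ := fun a => if ξ 0 a ≤ (n+1:ℝ) then (ξ 0 a - 1)^2 else 0 with hWdef
      have hWm : Measurable W := Measurable.ite (measurableSet_le (hmeas 0) measurable_const)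
        (((hmeas 0).sub measurable_const).pow_const 2) measurable_const
      have hWnn : 0 ≤ᵐ[μ] W := by
        filter_upwards with a
        simp only [hWdef, Pi.zero_apply]
        split_ifs
        · exact sq_nonneg _
        · exact le_refl 0
      have hWint : Integrable W μ := by
        refine Integrable.mono' (integrable_const ((n+1:ℝ)^2)) hWm.aestronglyMeasurable ?_
        filter_upwards [hpos 0] with a ha
        simp only [hWdef]
        split_ifs with h
        · rw [Real.norm_of_nonneg (sq_nonneg _)]; nlinarith
        · rw [norm_zero]; positivity
      have h0 : ∫ a, W a ∂μ = 0 :=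
        le_antisymm (hcon _ hn1) (integral_nonneg_of_ae hWnn)
      have := (integral_eq_zero_iff_of_nonneg_ae hWnn hWint).1 h0
      filter_upwards [this] with a ha using ha
    have hone : ∀ᵐ a ∂μ, ξ 0 a = 1 := by
      filter_upwards [ae_all_iff.2 hzero] with a ha
      obtain ⟨n, hn⟩ := exists_nat_ge (ξ 0 a)
      have hcond : ξ 0 a ≤ (n+1:ℝ) := by push_cast at hn ⊢; linarith
      have := ha n
      rw [if_pos hcond] at this
      have := pow_eq_zero_iff (n := 2) (by norm_num) |>.1 this
      linarith [sub_eq_zero.1 this]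
    exact hnonconst ⟨1, hone⟩
  obtain ⟨K, hK1, hm0⟩ := hexists
  have hK0 : (0:ℝ) < K := lt_of_lt_of_le one_pos hK1
  set m₀ : ℝ := ∫ a, (if ξ 0 a ≤ K then (ξ 0 a - 1)^2 else 0) ∂μ with hm₀def
  set J : ℝ := ∫ u in Set.Ioc (0:ℝ) (1/K), (u^2 * Real.exp (-2*u)) with hJdef
  have hJcont : Continuous (fun u : ℝ => u^2 * Real.exp (-2*u)) := by
    continuity
  have hJpos : 0 < J := by
    rw [hJdef, ← intervalIntegral.integral_of_le (by positivity : (0:ℝ) ≤ 1/K)]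
    apply intervalIntegral.intervalIntegral_pos_of_pos_on
    · exact hJcont.intervalIntegrable _ _
    · intro u hu
      have : 0 < u := hu.1
      positivity
    · positivity
  -- α enters
  have main : ∀ α : ℕ → ℝ, (∀ i, α i ∈ Set.Icc (0:ℝ) 1) → HasSum α 1 →
      (m₀ * J) * (∑' i : ℕ, (α i)^2) ≤
        ∫ a, ((∑' i : ℕ, α i * ξ i a) - 1) ^ 2 / (2 + ((∑' i : ℕ, α i * ξ i a) - 1)) ∂μ := by
    intro α hα hαsum
    have hαnn : ∀ i, 0 ≤ α i := fun i => (hα i).1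
    have hα1 : ∀ i, α i ≤ 1 := fun i => (hα i).2
    have hαsummable : Summable α := hαsum.summable
    set s : ℝ := ∑' i : ℕ, (α i)^2 with hsdef
    have hs_sum : Summable (fun i => (α i)^2) :=
      hαsummable.of_nonneg_of_le (fun i => sq_nonneg _)
        (fun i => by nlinarith [hαnn i, hα1 i])
    have hs_nn : 0 ≤ s := tsum_nonneg (fun i => sq_nonneg _)
    -- measurability of summands
    have hfm : ∀ i, Measurable fun a => α i * ξ i a := fun i => (hmeas i).const_mul _
    have hofR : ∀ i, Measurable fun a => ENNReal.ofReal (α i * ξ i a) :=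
      fun i => ENNReal.measurable_ofReal.comp (hfm i)
    have hFint : ∀ i, Integrable (fun a => α i * ξ i a) μ := fun i => (hinti i).const_mul _
    have hFmean : ∀ i, ∫ a, α i * ξ i a ∂μ = α i := by
      intro i; rw [integral_const_mul, hmeani i, mul_one]
    have hlin : ∀ i, ∫⁻ a, ENNReal.ofReal (α i * ξ i a) ∂μ = ENNReal.ofReal (α i) := by
      intro i
      rw [← ofReal_integral_eq_lintegral_ofReal (hFint i) ?_]
      · rw [hFmean i]
      · filter_upwards [hpos i] with a ha
        exact mul_nonneg (hαnn i) ha.le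
    have hlT : ∫⁻ a, (∑' i, ENNReal.ofReal (α i * ξ i a)) ∂μ = ENNReal.ofReal 1 := by
      rw [lintegral_tsum (fun i => (hofR i).aemeasurable)]
      rw [tsum_congr hlin, ← ENNReal.ofReal_tsum_of_nonneg hαnn hαsummable, hαsum.tsum_eq]
    have hTlt : ∀ᵐ a ∂μ, (∑' i, ENNReal.ofReal (α i * ξ i a)) < ⊤ :=
      ae_lt_top (Measurable.ennreal_tsum hofR) (by rw [hlT]; exact ENNReal.ofReal_ne_top)
    have hsummae : ∀ᵐ a ∂μ, Summable fun i => α i * ξ i a := by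
      filter_upwards [hTlt, hpos_all] with a hfin hposa
      have h2 : Summable fun i => Real.toNNReal (α i * ξ i a) := by
        rw [← ENNReal.tsum_coe_ne_top_iff_summable]
        exact hfin.ne
      have h3 := NNReal.summable_coe.2 h2
      exact h3.congr (fun i => Real.coe_toNNReal _ (mul_nonneg (hαnn i) (hposa i).le))
    set T : Ω → ℝ := fun a => (∑' i, ENNReal.ofReal (α i * ξ i a)).toReal with hTdef
    have hTmeas : Measurable T := (Measurable.ennreal_tsum hofR).ennreal_toReal
    have hTnn : ∀ a, 0 ≤ T a := fun a => ENNReal.toReal_nonneg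
    have hST : (fun a => ∑' i, α i * ξ i a) =ᵐ[μ] T := by
      filter_upwards [hsummae, hpos_all] with a hsa hposa
      have hnn : ∀ i, 0 ≤ α i * ξ i a := fun i => mul_nonneg (hαnn i) (hposa i).le
      simp only [hTdef]
      rw [← ENNReal.ofReal_tsum_of_nonneg hnn hsa, ENNReal.toReal_ofReal (tsum_nonneg hnn)]
    have hTint : Integrable T μ := by
      refine ⟨hTmeas.aestronglyMeasurable, ?_⟩
      rw [hasFiniteIntegral_iff_norm]
      have heq : ∀ᵐ a ∂μ, ENNReal.ofReal ‖T a‖ = ∑' i, ENNReal.ofReal (α i * ξ i a) := by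
        filter_upwards [hTlt] with a hfin
        rw [Real.norm_of_nonneg (hTnn a)]
        simp only [hTdef]
        rw [ENNReal.ofReal_toReal hfin.ne]
      rw [lintegral_congr_ae heq, hlT]
      exact ENNReal.ofReal_lt_top
    have hTmean : ∫ a, T a ∂μ = 1 := by
      have hnormint : ∀ i, ∫ a, ‖α i * ξ i a‖ ∂μ = α i := by
        intro i
        have : (∫ a, ‖α i * ξ i a‖ ∂μ) = ∫ a, α i * ξ i a ∂μ := by
          apply integral_congr_ae
          filter_upwards [hpos i] with a ha
          exact Real.norm_of_nonneg (mul_nonneg (hαnn i) ha.le)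
        rw [this, hFmean i]
      have hF_sum : Summable fun i => ∫ a, ‖α i * ξ i a‖ ∂μ :=
        hαsummable.congr (fun i => (hnormint i).symm)
      have h := integral_tsum_of_summable_integral_norm hFint hF_sum
      have h2 : ∑' i, ∫ a, α i * ξ i a ∂μ = 1 := by
        rw [tsum_congr hFmean, hαsum.tsum_eq]
      rw [← integral_congr_ae hST, ← h, h2]
    clear_value T
    have hm0nn : (0:ℝ) ≤ m₀ := hm0.le
    -- independence of scaled variables
    have hXind : iIndepFun (fun i a => α i * ξ i a) μ :=
      hindep.comp (fun i x => α i * x) (fun i => measurable_id.const_mul (α i))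
    have hmgfsum : ∀ (t : ℝ) (N : ℕ),
        ∫ a, Real.exp (t * ∑ i ∈ Finset.range N, α i * ξ i a) ∂μ
          = ∏ i ∈ Finset.range N, mgf (fun a => α i * ξ i a) μ t := by
      intro t N
      have h := hXind.mgf_sum (fun i => hfm i) (Finset.range N) (t := t)
      rw [← h]
      simp only [mgf, Finset.sum_apply]
    have hmgf_eq : ∀ (t : ℝ) (i : ℕ), mgf (fun a => α i * ξ i a) μ t
        = Real.exp (t * α i) * ∫ a, Real.exp ((t * α i) * (ξ 0 a - 1)) ∂μ := by
      intro t i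
      have h1 : mgf (fun a => α i * ξ i a) μ t = ∫ a, Real.exp ((t * α i) * ξ 0 a) ∂μ := by
        simp only [mgf]
        have heq : (fun a => Real.exp (t * (α i * ξ i a)))
            = fun a => Real.exp ((t * α i) * ξ i a) := by
          funext a; ring_nf
        rw [heq]
        exact ((hident i).comp
          (Real.measurable_exp.comp (measurable_id.const_mul (t * α i)))).integral_eq
      rw [h1, ← integral_const_mul]
      apply integral_congr_ae
      filter_upwards with a
      rw [← Real.exp_add]
      ring_nf
    -- a.e. convergence set-up shared by both bounds
    have hconvR : ∀ t : ℝ, t ≤ 0 →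
        Tendsto (fun N => ∫ a, Real.exp (t * ∑ i ∈ Finset.range N, α i * ξ i a) ∂μ)
          atTop (𝓝 (∫ a, Real.exp (t * T a) ∂μ)) := by
      intro t ht0
      apply tendsto_integral_filter_of_dominated_convergence (bound := fun _ => (1:ℝ))
      · apply Eventually.of_forall; intro N
        exact ((Finset.measurable_sum _ (fun i _ => hfm i)).const_mul t).exp.aestronglyMeasurable
      · apply Eventually.of_forall; intro N
        filter_upwards [hpos_all] with a hposa
        rw [Real.norm_of_nonneg (Real.exp_pos _).le]
        rw [Real.exp_le_one_iff]
        apply mul_nonpos_of_nonpos_of_nonneg ht0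
        exact Finset.sum_nonneg fun i _ => mul_nonneg (hαnn i) (hposa i).le
      · exact integrable_const 1
      · filter_upwards [hsummae, hST] with a hsa hTa
        have h1 : Tendsto (fun N => ∑ i ∈ Finset.range N, α i * ξ i a) atTop (𝓝 (T a)) := by
          have := hsa.hasSum.tendsto_sum_nat
          rwa [hTa] at this
        exact (Real.continuous_exp.tendsto _).comp (h1.const_mul t)
    have hfac : ∀ (t : ℝ), t ≤ 0 → -(1/K) ≤ t → ∀ i : ℕ,
        Real.exp (t * α i) * (1 + m₀/4 * (t^2 * (α i)^2))
          ≤ mgf (fun a => α i * ξ i a) μ t := by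
      intro t ht0 htK i
      have hτ0 : t * α i ≤ 0 := mul_nonpos_of_nonpos_of_nonneg ht0 (hαnn i)
      have hτK : -(1/K) ≤ t * α i := by nlinarith [hαnn i, hα1 i]
      have hfb := factor_bound μ (ξ 0) (hmeas 0) (hpos 0) hint0 hmean hK1 hτ0 hτK
      rw [hmgf_eq t i]
      have h3 : 1 + m₀/4 * (t^2 * (α i)^2) = 1 + (t * α i)^2/4 * m₀ := by ring
      rw [h3]
      exact mul_le_mul_of_nonneg_left hfb (Real.exp_pos _).le
    have hfac0 : ∀ (t : ℝ), t ≤ 0 → ∀ i : ℕ,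
        Real.exp (t * α i) ≤ mgf (fun a => α i * ξ i a) μ t := by
      intro t ht0 i
      have hτ0 : t * α i ≤ 0 := mul_nonpos_of_nonpos_of_nonneg ht0 (hαnn i)
      have hfb := factor_bound0 μ (ξ 0) (hmeas 0) (hpos 0) hint0 hmean hτ0
      rw [hmgf_eq t i]
      nlinarith [Real.exp_pos (t * α i)]
    have key : ∀ t : ℝ, t ≤ 0 → -(1/K) ≤ t →
        Real.exp t * (1 + m₀/4 * (t^2 * s)) ≤ ∫ a, Real.exp (t * T a) ∂μ := by
      intro t ht0 htK
      have hbdnn : ∀ i : ℕ, (0:ℝ) ≤ m₀/4 * (t^2 * (α i)^2) := by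
        intro i
        have h1 : (0:ℝ) ≤ t^2 * (α i)^2 := mul_nonneg (sq_nonneg _) (sq_nonneg _)
        positivity
      have hN : ∀ N, Real.exp t * (1 + m₀/4 * (t^2 * ∑ i ∈ Finset.range N, (α i)^2))
          ≤ ∫ a, Real.exp (t * ∑ i ∈ Finset.range N, α i * ξ i a) ∂μ := by
        intro N
        rw [hmgfsum t N]
        have step1 : ∏ i ∈ Finset.range N,
            (Real.exp (t * α i) * (1 + m₀/4 * (t^2 * (α i)^2)))
            ≤ ∏ i ∈ Finset.range N, mgf (fun a => α i * ξ i a) μ t := by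
          apply Finset.prod_le_prod
          · intro i _
            apply mul_nonneg (Real.exp_pos _).le
            linarith [hbdnn i]
          · intro i _; exact hfac t ht0 htK i
        refine le_trans ?_ step1
        rw [Finset.prod_mul_distrib, ← Real.exp_sum]
        have hAle : ∑ i ∈ Finset.range N, α i ≤ 1 :=
          sum_le_hasSum _ (fun i _ => hαnn i) hαsum
        have hexp : Real.exp t ≤ Real.exp (∑ i ∈ Finset.range N, t * α i) := by
          apply Real.exp_le_exp.2
          rw [← Finset.mul_sum]
          nlinarith [Finset.sum_nonneg (fun i (_ : i ∈ Finset.range N) => hαnn i)]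
        have hprod : 1 + m₀/4 * (t^2 * ∑ i ∈ Finset.range N, (α i)^2)
            ≤ ∏ i ∈ Finset.range N, (1 + m₀/4 * (t^2 * (α i)^2)) := by
          have h := prod_one_add_le (x := fun i => m₀/4 * (t^2 * (α i)^2)) hbdnn N
          have h2 : ∑ i ∈ Finset.range N, m₀/4 * (t^2 * (α i)^2)
              = m₀/4 * (t^2 * ∑ i ∈ Finset.range N, (α i)^2) := by
            rw [Finset.mul_sum, Finset.mul_sum]
          rwa [h2] at h
        have hposL : (0:ℝ) ≤ 1 + m₀/4 * (t^2 * ∑ i ∈ Finset.range N, (α i)^2) := by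
          have : (0:ℝ) ≤ ∑ i ∈ Finset.range N, (α i)^2 :=
            Finset.sum_nonneg fun i _ => sq_nonneg _
          have h1 : (0:ℝ) ≤ t^2 * ∑ i ∈ Finset.range N, (α i)^2 :=
            mul_nonneg (sq_nonneg _) this
          positivity
        exact mul_le_mul hexp hprod hposL (Real.exp_pos _).le
      have hconvL : Tendsto
          (fun N => Real.exp t * (1 + m₀/4 * (t^2 * ∑ i ∈ Finset.range N, (α i)^2)))
          atTop (𝓝 (Real.exp t * (1 + m₀/4 * (t^2 * s)))) := by
        apply Tendsto.const_mul
        apply Tendsto.const_add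
        apply Tendsto.const_mul
        exact Tendsto.const_mul _ hs_sum.hasSum.tendsto_sum_nat
      exact le_of_tendsto_of_tendsto' hconvL (hconvR t ht0) hN
    have keytriv : ∀ t : ℝ, t ≤ 0 → Real.exp t ≤ ∫ a, Real.exp (t * T a) ∂μ := by
      intro t ht0
      have hN : ∀ N, Real.exp t
          ≤ ∫ a, Real.exp (t * ∑ i ∈ Finset.range N, α i * ξ i a) ∂μ := by
        intro N
        rw [hmgfsum t N]
        have step1 : ∏ i ∈ Finset.range N, Real.exp (t * α i)
            ≤ ∏ i ∈ Finset.range N, mgf (fun a => α i * ξ i a) μ t := by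
          apply Finset.prod_le_prod
          · intro i _; exact (Real.exp_pos _).le
          · intro i _; exact hfac0 t ht0 i
        refine le_trans ?_ step1
        rw [← Real.exp_sum]
        apply Real.exp_le_exp.2
        rw [← Finset.mul_sum]
        have hAle : ∑ i ∈ Finset.range N, α i ≤ 1 :=
          sum_le_hasSum _ (fun i _ => hαnn i) hαsum
        nlinarith [Finset.sum_nonneg (fun i (_ : i ∈ Finset.range N) => hαnn i)]
      exact le_of_tendsto_of_tendsto' tendsto_const_nhds (hconvR t ht0) hN
    -- Fubini step
    have hexpint : ∀ b : ℝ, 0 < b → ∫ u in Set.Ioi (0:ℝ), Real.exp (-b * u) = b⁻¹ := by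
      intro b hb
      have h := integral_comp_mul_left_Ioi (fun x => Real.exp (-x)) 0 hb
      rw [mul_zero, integral_exp_neg_Ioi_zero] at h
      simp only [smul_eq_mul, mul_one] at h
      rw [← h]
      apply setIntegral_congr_fun measurableSet_Ioi
      intro u _
      simp [neg_mul]
    have hPmeas : Measurable (fun p : Ω × ℝ => Real.exp (-(1 + T p.1) * p.2)) :=
      ((((hTmeas.comp measurable_fst).const_add 1).neg).mul measurable_snd).exp
    have hPint : Integrable (fun p : Ω × ℝ => Real.exp (-(1 + T p.1) * p.2))
        (μ.prod (volume.restrict (Set.Ioi (0:ℝ)))) := by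
      rw [integrable_prod_iff hPmeas.aestronglyMeasurable]
      constructor
      · apply Eventually.of_forall; intro a
        have hb : 0 < 1 + T a := by linarith [hTnn a]
        have h := exp_neg_integrableOn_Ioi 0 hb
        exact h
      · have heq : (fun a => ∫ u in Set.Ioi (0:ℝ), ‖Real.exp (-(1 + T a) * u)‖)
            = fun a => (1 + T a)⁻¹ := by
          funext a
          have hb : 0 < 1 + T a := by linarith [hTnn a]
          rw [← hexpint _ hb]
          apply integral_congr_ae
          exact Eventually.of_forall fun u => Real.norm_of_nonneg (Real.exp_pos _).le
        rw [heq]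
        refine Integrable.mono' (integrable_const 1)
          ((hTmeas.const_add 1).inv).aestronglyMeasurable ?_
        apply Eventually.of_forall; intro a
        have hb : (1:ℝ) ≤ 1 + T a := by linarith [hTnn a]
        rw [Real.norm_of_nonneg (by positivity)]
        exact inv_le_one_of_one_le₀ hb
    have hswap := integral_integral_swap
      (f := fun a u => Real.exp (-(1 + T a) * u)) hPint
    have hLHS : (∫ a, (∫ u in Set.Ioi (0:ℝ), Real.exp (-(1 + T a) * u)) ∂μ)
        = ∫ a, (1 + T a)⁻¹ ∂μ := by
      apply integral_congr_ae
      apply Eventually.of_forall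
      intro a
      exact hexpint _ (by linarith [hTnn a])
    set G : ℝ → ℝ := fun u => ∫ a, Real.exp (-(1 + T a) * u) ∂μ with hGdef
    have hGint : Integrable G (volume.restrict (Set.Ioi (0:ℝ))) :=
      hPint.integral_prod_right
    set ind : ℝ → ℝ := fun u => Set.indicator (Set.Ioc (0:ℝ) (1/K))
        (fun u => (m₀/4*s) * (u^2 * Real.exp (-2*u))) u with hinddef
    have hind_int : Integrable ind (volume.restrict (Set.Ioi (0:ℝ))) := by
      rw [hinddef]
      apply IntegrableOn.integrable_indicator ?_ measurableSet_Ioc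
      have h1 : IntegrableOn (fun u => (m₀/4*s) * (u^2 * Real.exp (-2*u)))
          (Set.Ioc (0:ℝ) (1/K)) volume := by
        apply Continuous.integrableOn_Ioc
        continuity
      rw [IntegrableOn, Measure.restrict_restrict measurableSet_Ioc,
        Set.inter_eq_self_of_subset_left Set.Ioc_subset_Ioi_self]
      exact h1
    have hint1 : Integrable (fun u : ℝ => Real.exp (-2*u))
        (volume.restrict (Set.Ioi (0:ℝ))) :=
      exp_neg_integrableOn_Ioi 0 (by norm_num : (0:ℝ) < 2)
    have hGh : ∀ᵐ u ∂(volume.restrict (Set.Ioi (0:ℝ))),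
        Real.exp (-2*u) + ind u ≤ G u := by
      rw [ae_restrict_iff' measurableSet_Ioi]
      apply Eventually.of_forall
      intro u hu
      have hu0 : (0:ℝ) < u := hu
      have he2 : Real.exp (-2*u) = Real.exp (-u) * Real.exp (-u) := by
        rw [← Real.exp_add]; ring_nf
      have hGu : G u = Real.exp (-u) * ∫ a, Real.exp ((-u) * T a) ∂μ := by
        rw [hGdef, ← integral_const_mul]
        apply integral_congr_ae
        apply Eventually.of_forall
        intro a
        show Real.exp (-(1 + T a) * u) = Real.exp (-u) * Real.exp (-u * T a)
        rw [← Real.exp_add]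
        congr 1
        ring
      by_cases hcase : u ≤ 1/K
      · have hk := key (-u) (by linarith) (by linarith)
        have hind : ind u = (m₀/4*s) * (u^2 * Real.exp (-2*u)) := by
          rw [hinddef]
          exact Set.indicator_of_mem (Set.mem_Ioc.mpr ⟨hu0, hcase⟩) _
        rw [hind, hGu]
        calc Real.exp (-2*u) + (m₀/4*s) * (u^2 * Real.exp (-2*u))
            = Real.exp (-u) * (Real.exp (-u) * (1 + m₀/4 * ((-u)^2 * s))) := by
              rw [he2]; ring
          _ ≤ Real.exp (-u) * ∫ a, Real.exp ((-u) * T a) ∂μ :=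
              mul_le_mul_of_nonneg_left hk (Real.exp_pos _).le
      · have hk := keytriv (-u) (by linarith)
        have hind : ind u = 0 := by
          rw [hinddef]
          exact Set.indicator_of_notMem (fun hmem => hcase hmem.2) _
        rw [hind, hGu, add_zero, he2]
        exact mul_le_mul_of_nonneg_left hk (Real.exp_pos _).le
    have hinth : ∫ u in Set.Ioi (0:ℝ), (Real.exp (-2*u) + ind u) = 2⁻¹ + (m₀/4*s) * J := by
      rw [integral_add hint1 hind_int]
      have h1 : ∫ u in Set.Ioi (0:ℝ), Real.exp (-2*u) = 2⁻¹ :=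
        hexpint 2 (by norm_num)
      have h2 : ∫ u in Set.Ioi (0:ℝ), ind u = (m₀/4*s) * J := by
        rw [hinddef]
        rw [integral_indicator measurableSet_Ioc]
        rw [Measure.restrict_restrict measurableSet_Ioc,
          Set.inter_eq_self_of_subset_left Set.Ioc_subset_Ioi_self]
        rw [integral_const_mul, hJdef]
      rw [h1, h2]
    have hinv : 2⁻¹ + (m₀/4*s) * J ≤ ∫ a, (1 + T a)⁻¹ ∂μ := by
      calc 2⁻¹ + (m₀/4*s) * J
          = ∫ u in Set.Ioi (0:ℝ), (Real.exp (-2*u) + ind u) := hinth.symm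
        _ ≤ ∫ u in Set.Ioi (0:ℝ), G u := integral_mono_ae (hint1.add hind_int) hGint hGh
        _ = ∫ a, (1 + T a)⁻¹ ∂μ := by
            rw [← hswap]
            exact hLHS
    have hTinv_int : Integrable (fun a => (1 + T a)⁻¹) μ := by
      refine Integrable.mono' (integrable_const 1)
        ((hTmeas.const_add 1).inv).aestronglyMeasurable ?_
      apply Eventually.of_forall; intro a
      have hb : (1:ℝ) ≤ 1 + T a := by linarith [hTnn a]
      rw [Real.norm_of_nonneg (by positivity)]
      exact inv_le_one_of_one_le₀ hb
    have hFae : (fun a => ((∑' i, α i * ξ i a) - 1)^2 / (2 + ((∑' i, α i * ξ i a) - 1)))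
        =ᵐ[μ] fun a => (T a - 3) + 4 * (1 + T a)⁻¹ := by
      filter_upwards [hST] with a ha
      have ha' : ∑' i, α i * ξ i a = T a := ha
      rw [ha']
      have hb : 0 < 1 + T a := by linarith [hTnn a]
      have h2 : 2 + (T a - 1) = 1 + T a := by ring
      rw [h2]
      field_simp
      ring
    have hTsub : Integrable (fun a => T a - 3) μ := hTint.sub (integrable_const 3)
    have hTinv4 : Integrable (fun a => 4 * (1 + T a)⁻¹) μ := hTinv_int.const_mul 4
    rw [integral_congr_ae hFae]
    rw [integral_add hTsub hTinv4]
    rw [integral_sub hTint (integrable_const 3), hTmean, integral_const, integral_const_mul]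
    simp only [measure_univ, probReal_univ, ENNReal.toReal_one, smul_eq_mul, one_mul]
    have hring : m₀ * J * s = 4 * ((m₀/4*s) * J) := by ring
    linarith [hinv]
  refine ⟨1/(m₀ * J), one_div_pos.mpr (mul_pos hm0 hJpos), ?_⟩
  intro α hα hαsum
  have h := main α hα hαsum
  rw [one_div_one_div]
  exact h
end
end

section
/- For every θ ∈ (0,1) there exist constants c₁, c₂ ∈ (0,∞) such that for all u ∈ (−1,∞): c₁ u²/(2+u) ≤ 1 + θu − (1+u)^θ ≤ c₂ u². -/
noncomputable section

open Set Real

/-- If `F'` is a derivative of `F` on a convex set containing `0`, `F'` is monotone on the set,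
and `F 0 = F' 0 = 0`, then `F ≥ 0` on the set. -/
lemma aux_nonneg_of_deriv_mono {F F' : ℝ → ℝ} {s : Set ℝ} (hs : Convex ℝ s)
    (h0 : (0:ℝ) ∈ s) (hF : ∀ x ∈ s, HasDerivAt F (F' x) x) (hmono : MonotoneOn F' s)
    (hF'0 : F' 0 = 0) (hF0 : F 0 = 0) : ∀ x ∈ s, 0 ≤ F x := by
  intro x hx
  rcases le_total 0 x with hx0 | hx0
  · have hm : MonotoneOn F (s ∩ Ici 0) := by
      apply monotoneOn_of_deriv_nonneg (hs.inter (convex_Ici 0))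
      · exact fun y hy => (hF y hy.1).continuousAt.continuousWithinAt
      · exact fun y hy =>
          ((hF y (interior_subset hy).1).differentiableAt).differentiableWithinAt
      · intro y hy
        have hys : y ∈ s := (interior_subset hy).1
        have hy0 : 0 < y := by
          have := interior_mono (inter_subset_right (s := s)) hy
          rwa [interior_Ici] at this
        rw [(hF y hys).deriv]
        calc (0:ℝ) = F' 0 := hF'0.symm
          _ ≤ F' y := hmono h0 hys hy0.le
    have := hm ⟨h0, mem_Ici.mpr le_rfl⟩ ⟨hx, hx0⟩ hx0
    rwa [hF0] at this
  · have hm : AntitoneOn F (s ∩ Iic 0) := by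
      apply antitoneOn_of_deriv_nonpos (hs.inter (convex_Iic 0))
      · exact fun y hy => (hF y hy.1).continuousAt.continuousWithinAt
      · exact fun y hy =>
          ((hF y (interior_subset hy).1).differentiableAt).differentiableWithinAt
      · intro y hy
        have hys : y ∈ s := (interior_subset hy).1
        have hy0 : y < 0 := by
          have := interior_mono (inter_subset_right (s := s)) hy
          rwa [interior_Iic] at this
        rw [(hF y hys).deriv]
        calc F' y ≤ F' 0 := hmono hys h0 hy0.le
          _ = 0 := hF'0
    have := hm ⟨hx, hx0⟩ ⟨h0, mem_Iic.mpr le_rfl⟩ hx0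
    rwa [hF0] at this

/-- For every `θ ∈ (0,1)` there exist constants `c₁, c₂ ∈ (0,∞)` such that
for all `u ∈ (−1,∞)`: `c₁ u²/(2+u) ≤ 1 + θu − (1+u)^θ ≤ c₂ u²`. -/
theorem fractional_moment_auxiliary_bounds (θ : ℝ) (hθ : θ ∈ Set.Ioo (0:ℝ) 1) :
    ∃ c₁ : ℝ, 0 < c₁ ∧ ∃ c₂ : ℝ, 0 < c₂ ∧ ∀ u : ℝ, -1 < u →
      c₁ * (u ^ 2 / (2 + u)) ≤ 1 + θ * u - (1 + u) ^ θ ∧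
      1 + θ * u - (1 + u) ^ θ ≤ c₂ * u ^ 2 := by
  obtain ⟨hθ0, hθ1⟩ := hθ
  have hθ1' : 0 < 1 - θ := by linarith
  set c₁ : ℝ := θ * (1 - θ) / 8 with hc₁def
  have hc₁ : 0 < c₁ := by positivity
  refine ⟨c₁, hc₁, 4, by norm_num, ?_⟩
  -- derivative of (1+u)^p for u > -1
  have hpow : ∀ (p : ℝ) (u : ℝ), -1 < u →
      HasDerivAt (fun v : ℝ => (1 + v) ^ p) (p * (1 + u) ^ (p - 1)) u := by
    intro p u hu
    have h1u : (0:ℝ) < 1 + u := by linarith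
    have := (Real.hasDerivAt_rpow_const (x := 1 + u) (p := p)
      (Or.inl h1u.ne')).comp u ((hasDerivAt_id u).const_add 1)
    exact this.congr_deriv (by simp)
  -- the function f and its derivative f'
  set f : ℝ → ℝ := fun u => 1 + θ * u - (1 + u) ^ θ with hfdef
  set f' : ℝ → ℝ := fun u => θ - θ * (1 + u) ^ (θ - 1) with hf'def
  have hfderiv : ∀ u : ℝ, -1 < u → HasDerivAt f (f' u) u := by
    intro u hu
    have := ((hasDerivAt_id u).const_mul θ).const_add 1 |>.sub (hpow θ u hu)
    exact this.congr_deriv (by simp [hf'def])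
  have hf'deriv : ∀ u : ℝ, -1 < u →
      HasDerivAt f' (θ * (1 - θ) * (1 + u) ^ (θ - 2)) u := by
    intro u hu
    have := (hasDerivAt_const u θ).sub (((hpow (θ - 1) u hu)).const_mul θ)
    refine this.congr_deriv ?_
    ring_nf
  intro u hu
  have h1u : (0:ℝ) < 1 + u := by linarith
  have h2u : (0:ℝ) < 2 + u := by linarith
  constructor
  · -- LOWER BOUND: c₁ * u^2/(2+u) ≤ f u
    set H : ℝ → ℝ := fun v => f v - c₁ * (v - 2 + 4 * (2 + v)⁻¹) with hHdef
    set H' : ℝ → ℝ := fun v => f' v - c₁ * (1 - 4 * ((2 + v) ^ 2)⁻¹) with hH'def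
    have hHderiv : ∀ v ∈ Ioi (-1 : ℝ), HasDerivAt H (H' v) v := by
      intro v hv
      have h2v : (0:ℝ) < 2 + v := by simp only [mem_Ioi] at hv; linarith
      have hinv : HasDerivAt (fun w : ℝ => (2 + w)⁻¹) (-1 / (2 + v) ^ 2) v := by
        exact (((hasDerivAt_id v).const_add 2).inv h2v.ne').congr_deriv (by simp)
      have := (hfderiv v hv).sub
        ((((hasDerivAt_id v).sub_const 2).add (hinv.const_mul 4)).const_mul c₁)
      refine this.congr_deriv ?_
      simp only [hH'def]
      ring
    have hH'deriv : ∀ v ∈ Ioi (-1:ℝ),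
        HasDerivAt H' (θ * (1 - θ) * (1 + v) ^ (θ - 2) - c₁ * (8 * ((2 + v) ^ 3)⁻¹)) v := by
      intro v hv
      have h2v : (0:ℝ) < 2 + v := by simp only [mem_Ioi] at hv; linarith
      have hsq : HasDerivAt (fun w : ℝ => (2 + w) ^ 2) (2 * (2 + v)) v := by
        exact (((hasDerivAt_id v).const_add 2).pow 2).congr_deriv (by simp)
      have hinv : HasDerivAt (fun w : ℝ => ((2 + w) ^ 2)⁻¹)
          (-(2 * (2 + v)) / ((2 + v) ^ 2) ^ 2) v := hsq.inv (by positivity)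
      have := (hf'deriv v hv).sub
        (((hasDerivAt_const v (1:ℝ)).sub (hinv.const_mul 4)).const_mul c₁)
      refine this.congr_deriv ?_
      field_simp
      ring
    have hmono : MonotoneOn H' (Ioi (-1:ℝ)) := by
      apply monotoneOn_of_deriv_nonneg (convex_Ioi _)
      · exact fun v hv => (hH'deriv v hv).continuousAt.continuousWithinAt
      · intro v hv
        rw [isOpen_Ioi.interior_eq] at hv
        exact (hH'deriv v hv).differentiableAt.differentiableWithinAt
      · intro v hv
        rw [isOpen_Ioi.interior_eq] at hv
        rw [(hH'deriv v hv).deriv]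
        have h1v : (0:ℝ) < 1 + v := by simp only [mem_Ioi] at hv; linarith
        have h2v : (0:ℝ) < 2 + v := by simp only [mem_Ioi] at hv; linarith
        have key : (1 + v) ^ (2 - θ) ≤ (2 + v) ^ 3 := by
          rcases le_total v 0 with hv0 | hv0
          · have h1 : (1 + v) ^ (2 - θ) ≤ 1 :=
              Real.rpow_le_one h1v.le (by linarith) (by linarith)
            have h2 : (1:ℝ) ≤ (2 + v) ^ 3 := one_le_pow₀ (by linarith)
            linarith
          · have h1 : (1 + v) ^ (2 - θ) ≤ (1 + v) ^ ((2:ℕ):ℝ) :=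
              Real.rpow_le_rpow_of_exponent_le (by linarith) (by push_cast; linarith)
            rw [Real.rpow_natCast] at h1
            nlinarith [h1]
        have hinvle : ((2 + v) ^ 3)⁻¹ ≤ (1 + v) ^ (θ - 2) := by
          have heq : (1 + v) ^ (θ - 2) = ((1 + v) ^ (2 - θ))⁻¹ := by
            rw [← Real.rpow_neg h1v.le]; ring_nf
          rw [heq]
          exact inv_anti₀ (by positivity) key
        have hc8 : c₁ * 8 = θ * (1 - θ) := by rw [hc₁def]; ring
        have : c₁ * (8 * ((2 + v) ^ 3)⁻¹) = θ * (1 - θ) * ((2 + v) ^ 3)⁻¹ := by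
          rw [← hc8]; ring
        rw [this]
        have := mul_le_mul_of_nonneg_left hinvle (by positivity : (0:ℝ) ≤ θ * (1 - θ))
        linarith
    have hH'0 : H' 0 = 0 := by
      simp only [hH'def, hf'def]
      norm_num [Real.one_rpow]
    have hH0 : H 0 = 0 := by
      simp only [hHdef, hfdef]
      norm_num [Real.one_rpow]
    have hnn := aux_nonneg_of_deriv_mono (convex_Ioi (-1:ℝ)) (by norm_num)
      hHderiv hmono hH'0 hH0 u hu
    have heq : u ^ 2 / (2 + u) = u - 2 + 4 * (2 + u)⁻¹ := by
      field_simp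
      ring
    simp only [hHdef, hfdef] at hnn
    rw [heq]
    linarith [hnn]
  · -- UPPER BOUND: f u ≤ 4 * u^2
    rcases le_or_gt u (-1/2) with hcase | hcase
    · -- u ∈ (-1, -1/2] : f u ≤ 1 + θu ≤ 1 ≤ 4 u²
      have h1 : (0:ℝ) ≤ (1 + u) ^ θ := Real.rpow_nonneg h1u.le θ
      have h2 : θ * u ≤ 0 := mul_nonpos_of_nonneg_of_nonpos hθ0.le (by linarith)
      nlinarith
    · -- u > -1/2 : convexity argument
      set G : ℝ → ℝ := fun v => 4 * v ^ 2 - f v with hGdef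
      set G' : ℝ → ℝ := fun v => 8 * v - f' v with hG'def
      have hGderiv : ∀ v ∈ Ioi (-1/2 : ℝ), HasDerivAt G (G' v) v := by
        intro v hv
        have hv1 : (-1:ℝ) < v := by simp only [mem_Ioi] at hv; linarith
        have := (((hasDerivAt_pow 2 v).const_mul 4)).sub (hfderiv v hv1)
        refine this.congr_deriv ?_
        simp only [hG'def]; ring
      have hG'deriv : ∀ v ∈ Ioi (-1/2:ℝ),
          HasDerivAt G' (8 - θ * (1 - θ) * (1 + v) ^ (θ - 2)) v := by
        intro v hv
        have hv1 : (-1:ℝ) < v := by simp only [mem_Ioi] at hv; linarith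
        have := ((hasDerivAt_id v).const_mul 8).sub (hf'deriv v hv1)
        refine this.congr_deriv ?_
        ring
      have hmono : MonotoneOn G' (Ioi (-1/2:ℝ)) := by
        apply monotoneOn_of_deriv_nonneg (convex_Ioi _)
        · exact fun v hv => (hG'deriv v hv).continuousAt.continuousWithinAt
        · intro v hv
          rw [isOpen_Ioi.interior_eq] at hv
          exact (hG'deriv v hv).differentiableAt.differentiableWithinAt
        · intro v hv
          rw [isOpen_Ioi.interior_eq] at hv
          rw [(hG'deriv v hv).deriv]
          have hv2 : (1/2:ℝ) ≤ 1 + v := by simp only [mem_Ioi] at hv; linarith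
          have h1 : (1 + v) ^ (θ - 2) ≤ (1/2:ℝ) ^ (θ - 2) :=
            Real.rpow_le_rpow_of_nonpos (by norm_num) hv2 (by linarith)
          have h2 : (1/2:ℝ) ^ (θ - 2) ≤ 4 := by
            have e1 : (1/2:ℝ) ^ (θ - 2) = (2:ℝ) ^ (-(θ - 2)) := by
              rw [one_div, Real.inv_rpow (by norm_num : (0:ℝ) ≤ 2),
                ← Real.rpow_neg (by norm_num : (0:ℝ) ≤ 2)]
            have e2 : (2:ℝ) ^ (-(θ - 2)) ≤ (2:ℝ) ^ ((2:ℕ):ℝ) :=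
              Real.rpow_le_rpow_of_exponent_le one_le_two (by push_cast; linarith)
            rw [Real.rpow_natCast] at e2
            rw [e1]
            norm_num at e2 ⊢
            linarith
          have h5 : θ * (1 - θ) ≤ 1 := by nlinarith
          have h6 : (0:ℝ) ≤ (1 + v) ^ (θ - 2) := by
            apply Real.rpow_nonneg; simp only [mem_Ioi] at hv; linarith
          nlinarith [mul_le_mul h5 (h1.trans h2) h6 zero_le_one]
      have hG'0 : G' 0 = 0 := by
        simp only [hG'def, hf'def]
        norm_num [Real.one_rpow]
      have hG0 : G 0 = 0 := by
        simp only [hGdef, hfdef]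
        norm_num [Real.one_rpow]
      have hnn := aux_nonneg_of_deriv_mono (convex_Ioi (-1/2:ℝ)) (by norm_num)
        hGderiv hmono hG'0 hG0 u hcase
      simp only [hGdef, hfdef] at hnn
      linarith
end
end
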